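/- Existence of a universal Martin-Löf test (Martin-Löf): There exists a Martin-Löf test ⟨U_i⟩_{i∈ω} such that for every Martin-Löf test ⟨V_i⟩_{i∈ω}, ⋂_{i∈ω} V_i ⊆ ⋂_{i∈ω} U_i. -/

import Mathlib

open scoped ENNReal NNReal Classical

namespace AR

/-- Elements of Cantor space `2^ω`: infinite binary sequences. -/
abbrev Seq := ℕ → Bool

/-- Finite binary strings `2^{<ω}`. -/
abbrev Str := List Bool

/-- The first `n` bits of a sequence `A`, as a finite string (`A↾n`). -/
def pre (A : Seq) (n : ℕ) : Str := List.ofFn fun i : Fin n => A i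

/-- The basic clopen cylinder `[σ]` of all sequences extending `σ`. -/
def cyl (σ : Str) : Set Seq := {A | pre A σ.length = σ}

/-- A measure on Cantor space is *fair-coin* if every cylinder `[σ]` has measure
`2^{-|σ|}`; this uniquely characterizes the usual product measure `μ` on `2^ω`. -/
def FairCoin (μ : MeasureTheory.Measure Seq) : Prop :=
  ∀ σ : Str, μ (cyl σ) = (2 : ℝ≥0∞)⁻¹ ^ σ.length

/-- A machine is a partial computable function `2^{<ω} ⇀ 2^{<ω}`. -/
def IsMachine (M : Str →. Str) : Prop := Partrec M

/-- Kolmogorov complexity of `τ` relative to the machine `M`: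
`C_M(τ) = min{|σ| : M(σ)↓ = τ}`, with value `∞` if no such `σ` exists. -/
noncomputable def Cplx (M : Str →. Str) (τ : Str) : ℕ∞ :=
  sInf ((fun σ : Str => (σ.length : ℕ∞)) '' {σ | τ ∈ M σ})

/-- A universal machine: a machine simulating every machine up to an additive
constant.  `Cplx U` for universal `U` is plain Kolmogorov complexity `C`. -/
def UniversalMachine (U : Str →. Str) : Prop :=
  IsMachine U ∧ ∀ M : Str →. Str, IsMachine M → ∃ c : ℕ, ∀ τ, Cplx U τ ≤ Cplx M τ + c

/-- A set of strings is prefix-free if none of its elements is a proper initial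
segment of another. -/
def PrefixFree (S : Set Str) : Prop :=
  ∀ σ ∈ S, ∀ τ ∈ S, σ <+: τ → σ = τ

/-- A prefix-free machine: a machine whose domain is prefix-free. -/
def PrefixFreeMachine (M : Str →. Str) : Prop :=
  IsMachine M ∧ PrefixFree {σ | (M σ).Dom}

/-- A universal prefix-free machine.  `Cplx U` for such `U` is prefix-free
Kolmogorov complexity `K`. -/
def UniversalPFMachine (U : Str →. Str) : Prop :=
  PrefixFreeMachine U ∧
    ∀ M : Str →. Str, PrefixFreeMachine M → ∃ c : ℕ, ∀ τ, Cplx U τ ≤ Cplx M τ + c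

/-- A c.e. (recursively enumerable) predicate. -/
def CEPred {α} [Primcodable α] (p : α → Prop) : Prop :=
  Partrec fun a => Part.assert (p a) fun _ => Part.some ()

/-- A Martin-Löf test: a sequence of uniformly Σ⁰₁ classes `U i`, given by a single
c.e. set `W` of pairs, with `μ (U i) ≤ 2^{-i}`. -/
def MLTest (μ : MeasureTheory.Measure Seq) (U : ℕ → Set Seq) : Prop :=
  ∃ W : Set (ℕ × Str), CEPred (· ∈ W) ∧
    (∀ i, U i = ⋃ σ ∈ {σ : Str | (i, σ) ∈ W}, cyl σ) ∧
    ∀ i, μ (U i) ≤ (2 : ℝ≥0∞)⁻¹ ^ i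

/-- `A` is Martin-Löf random if it passes every Martin-Löf test. -/
def MLRandom (μ : MeasureTheory.Measure Seq) (A : Seq) : Prop :=
  ∀ U : ℕ → Set Seq, MLTest μ U → A ∉ ⋂ i, U i

open Nat.Partrec (Code)
open Nat.Partrec.Code
open Encodable

/-! ### the algorithm -/

def takeAux (n : ℕ) (l : Str) : Str × ℕ :=
  l.foldl (fun p a => if p.2 < n then (p.1 ++ [a], p.2 + 1) else p) ([], 0)

def pfx (σ τ : Str) : Bool := decide (σ = (takeAux σ.length τ).1)

def covered (σ : Str) (L : List Str) : Bool := L.foldr (fun τ b => pfx τ σ || b) false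

def flt (σ : Str) (L : List Str) : List Str :=
  L.foldr (fun τ acc => cond (pfx σ τ) acc (τ :: acc)) []

def maxLen (k : ℕ) (L : List Str) : ℕ := L.foldr (fun τ m => max τ.length m) k

def wsum (K : ℕ) (L : List Str) : ℕ := L.foldr (fun τ n => 2 ^ (K - τ.length) + n) 0

def wtOK (k : ℕ) (L : List Str) : Bool :=
  decide (wsum (maxLen k L) L ≤ 2 ^ (maxLen k L - k))

def step (k : ℕ) (L : List Str) (σ : Str) : List Str × Bool :=
  cond (covered σ L) (L, true)
    (cond (wtOK k (σ :: flt σ L)) (σ :: flt σ L, true) (L, false))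

def cand (e k s : ℕ) : Option Str :=
  cond ((evaln s.unpair.1 (Denumerable.ofNat Code e) (Nat.pair k s.unpair.2)).isSome)
    (decode₂ Str s.unpair.2) none

def state (e k : ℕ) : ℕ → List Str
  | 0 => []
  | s + 1 => Option.casesOn (cand e k s) (state e k s) fun σ => (step k (state e k s) σ).1

def acceptAt (e k s : ℕ) : Option Str :=
  Option.casesOn (cand e k s) none fun σ => cond (step k (state e k s) σ).2 (some σ) none

def WU : Set (ℕ × Str) :=
  {p | ∃ m : ℕ, acceptAt m.unpair.1 (p.1 + m.unpair.1 + 1) m.unpair.2 = some p.2}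

def Uset (n : ℕ) : Set Seq := ⋃ σ ∈ {σ : Str | (n, σ) ∈ WU}, cyl σ

/-! ### basic lemmas about the pieces -/

theorem takeAux_const {n : ℕ} (l : Str) {p : Str × ℕ} (h : ¬ p.2 < n) :
    l.foldl (fun p a => if p.2 < n then (p.1 ++ [a], p.2 + 1) else p) p = p := by
  induction l generalizing p with
  | nil => rfl
  | cons a l ih => simpa [if_neg h] using ih h

theorem takeAux_spec {n : ℕ} (l : Str) (acc : Str) (c : ℕ) :
    (l.foldl (fun p a => if p.2 < n then (p.1 ++ [a], p.2 + 1) else p) (acc, c)).1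
      = acc ++ l.take (n - c) := by
  induction l generalizing acc c with
  | nil => simp
  | cons a l ih =>
    by_cases h : c < n
    · have hn : n - c = (n - (c + 1)) + 1 := by omega
      simp only [List.foldl_cons, if_pos h, ih, hn, List.take_succ_cons,
        List.append_assoc, List.singleton_append]
    · have hn : n - c = 0 := by omega
      rw [List.foldl_cons, if_neg h, takeAux_const (p := (acc, c)) l h, hn]
      simp

theorem takeAux_eq (n : ℕ) (l : Str) : (takeAux n l).1 = l.take n := by
  simpa [takeAux] using takeAux_spec (n := n) l [] 0

theorem pfx_iff {σ τ : Str} : pfx σ τ = true ↔ σ <+: τ := by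
  rw [pfx, decide_eq_true_iff, takeAux_eq, List.prefix_iff_eq_take]

theorem covered_iff {σ : Str} {L : List Str} :
    covered σ L = true ↔ ∃ τ ∈ L, τ <+: σ := by
  induction L with
  | nil => simp [covered]
  | cons τ L ih =>
    simp only [covered, List.foldr_cons, Bool.or_eq_true, List.mem_cons] at *
    rw [ih, pfx_iff]
    constructor
    · rintro (h | ⟨τ', h1, h2⟩)
      exacts [⟨τ, Or.inl rfl, h⟩, ⟨τ', Or.inr h1, h2⟩]
    · rintro ⟨τ', (rfl | h1), h2⟩
      exacts [Or.inl h2, Or.inr ⟨τ', h1, h2⟩]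

theorem mem_flt {σ τ : Str} {L : List Str} :
    τ ∈ flt σ L ↔ τ ∈ L ∧ ¬ σ <+: τ := by
  induction L with
  | nil => simp [flt]
  | cons τ' L ih =>
    simp only [flt, List.foldr_cons] at *
    rcases h : pfx σ τ' with _ | _
    · have h' : ¬ σ <+: τ' := by rw [← pfx_iff, h]; simp
      simp only [cond_false, List.mem_cons, ih]
      constructor
      · rintro (rfl | ⟨h1, h2⟩)
        exacts [⟨Or.inl rfl, h'⟩, ⟨Or.inr h1, h2⟩]
      · rintro ⟨(rfl | h1), h2⟩
        exacts [Or.inl rfl, Or.inr ⟨h1, h2⟩]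
    · have h' : σ <+: τ' := pfx_iff.1 h
      simp only [cond_true, ih, List.mem_cons]
      constructor
      · rintro ⟨h1, h2⟩; exact ⟨Or.inr h1, h2⟩
      · rintro ⟨(rfl | h1), h2⟩
        exacts [absurd h' h2, ⟨h1, h2⟩]

theorem flt_sublist (σ : Str) (L : List Str) : List.Sublist (flt σ L) L := by
  induction L with
  | nil => simp [flt]
  | cons τ L ih =>
    simp only [flt, List.foldr_cons] at *
    cases pfx σ τ
    · exact ih.cons₂ τ
    · exact ih.cons τ

theorem le_maxLen (k : ℕ) (L : List Str) : k ≤ maxLen k L := by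
  induction L with
  | nil => exact le_refl k
  | cons τ L ih => exact ih.trans (le_max_right _ _)

theorem len_le_maxLen {k : ℕ} {L : List Str} {τ : Str} (h : τ ∈ L) :
    τ.length ≤ maxLen k L := by
  induction L with
  | nil => simp at h
  | cons τ' L ih =>
    rcases List.mem_cons.1 h with rfl | h
    · exact le_max_left _ _
    · exact (ih h).trans (le_max_right _ _)


theorem pre_length (A : Seq) (n : ℕ) : (pre A n).length = n := by simp [pre]

theorem pre_getElem (A : Seq) (n : ℕ) (i : ℕ) (h : i < (pre A n).length) :
    (pre A n)[i] = A i := by simp [pre]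

theorem pre_take {n m : ℕ} (A : Seq) (h : n ≤ m) : (pre A m).take n = pre A n := by
  apply List.ext_getElem
  · simp [pre, h]
  · intro i h1 h2
    rw [List.getElem_take, pre_getElem, pre_getElem]

theorem cyl_mono {σ τ : Str} (h : σ <+: τ) : cyl τ ⊆ cyl σ := by
  intro A hA
  have hl : σ.length ≤ τ.length := h.length_le
  have hst : σ = τ.take σ.length := List.prefix_iff_eq_take.1 h
  rw [cyl, Set.mem_setOf_eq] at hA ⊢
  calc pre A σ.length = (pre A τ.length).take σ.length := (pre_take A hl).symm
    _ = τ.take σ.length := by rw [hA]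
    _ = σ := hst.symm

theorem cyl_disjoint {σ τ : Str} (h1 : ¬ σ <+: τ) (h2 : ¬ τ <+: σ) :
    Disjoint (cyl σ) (cyl τ) := by
  rw [Set.disjoint_left]
  intro A hσ hτ
  rw [cyl, Set.mem_setOf_eq] at hσ hτ
  rcases le_total σ.length τ.length with h | h
  · apply h1
    rw [List.prefix_iff_eq_take, ← hτ, pre_take A h, hσ]
  · apply h2
    rw [List.prefix_iff_eq_take, ← hσ, pre_take A h, hτ]

theorem measurable_cyl (σ : Str) : MeasurableSet (cyl σ) := by
  have hrw : cyl σ = ⋂ i : ℕ, {A : Seq | (pre A σ.length)[i]? = σ[i]?} := by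
    ext A
    simp only [cyl, Set.mem_setOf_eq, Set.mem_iInter]
    exact ⟨fun h i => by rw [h], fun h => List.ext_getElem? h⟩
  rw [hrw]
  refine MeasurableSet.iInter fun i => ?_
  by_cases h : i < σ.length
  · have : {A : Seq | (pre A σ.length)[i]? = σ[i]?}
        = (fun A : Seq => A i) ⁻¹' {b : Bool | some b = σ[i]?} := by
      ext A
      simp [pre, List.getElem?_ofFn, h]
    rw [this]
    exact measurable_pi_apply i MeasurableSpace.measurableSet_top
  · have : {A : Seq | (pre A σ.length)[i]? = σ[i]?}
        = {A : Seq | (none : Option Bool) = σ[i]?} := by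
      ext A
      have he : (pre A σ.length)[i]? = none :=
        List.getElem?_eq_none (by rw [pre_length]; omega)
      rw [Set.mem_setOf_eq, he]; rfl
    rw [this]
    by_cases h2 : (none : Option Bool) = σ[i]?
    · simp only [h2, Set.setOf_true]; exact MeasurableSet.univ
    · simp only [h2, Set.setOf_false]; exact MeasurableSet.empty

/-- total weight of a list of strings -/
noncomputable def listSum (L : List Str) : ℝ≥0∞ :=
  (L.map fun τ => (2 : ℝ≥0∞)⁻¹ ^ τ.length).sum

def Ach (L : List Str) : Prop := L.Pairwise fun σ τ => ¬ σ <+: τ ∧ ¬ τ <+: σ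

theorem meas_biUnion_list (μ : MeasureTheory.Measure Seq) (hμ : FairCoin μ)
    {L : List Str} (h : Ach L) :
    μ (⋃ τ ∈ {τ : Str | τ ∈ L}, cyl τ) = listSum L := by
  induction L with
  | nil => simp [listSum]
  | cons σ L ih =>
    obtain ⟨h1, h2⟩ := List.pairwise_cons.1 h
    have hset : {τ : Str | τ ∈ σ :: L} = insert σ {τ : Str | τ ∈ L} := by
      ext τ; simp [List.mem_cons]
    rw [hset, Set.biUnion_insert]
    rw [MeasureTheory.measure_union _ (MeasurableSet.biUnion (Set.to_countable _)
      fun τ _ => measurable_cyl τ)]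
    · rw [ih h2, hμ σ]; simp [listSum]
    · refine Set.disjoint_iUnion₂_right.2 fun τ hτ => ?_
      exact cyl_disjoint (h1 τ hτ).1 (h1 τ hτ).2


-- appended to main
theorem wsum_eq (K : ℕ) (L : List Str) :
    wsum K L = (L.map fun τ => 2 ^ (K - τ.length)).sum := by
  induction L with
  | nil => rfl
  | cons τ L ih => simp [wsum, List.foldr_cons, ih.symm]

theorem inv_two_pow_mul {a K : ℕ} (h : a ≤ K) :
    (2 : ℝ≥0∞)⁻¹ ^ a * 2 ^ K = (2 : ℝ≥0∞) ^ (K - a) := by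
  have : (2 : ℝ≥0∞) ^ K = 2 ^ a * 2 ^ (K - a) := by
    rw [← pow_add, Nat.add_sub_cancel' h]
  rw [this, ← mul_assoc, ← mul_pow, ENNReal.inv_mul_cancel two_ne_zero ENNReal.ofNat_ne_top,
    one_pow, one_mul]

theorem listSum_mul {K : ℕ} {L : List Str} (h : ∀ τ ∈ L, τ.length ≤ K) :
    listSum L * 2 ^ K = (wsum K L : ℝ≥0∞) := by
  induction L with
  | nil => simp [listSum, wsum]
  | cons τ L ih =>
    have h1 : τ.length ≤ K := h τ (List.mem_cons_self)
    have h2 : ∀ τ' ∈ L, τ'.length ≤ K := fun τ' hτ' => h τ' (List.mem_cons_of_mem τ hτ')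
    have : listSum (τ :: L) = (2:ℝ≥0∞)⁻¹ ^ τ.length + listSum L := by simp [listSum]
    rw [this, add_mul, ih h2, inv_two_pow_mul h1]
    have : wsum K (τ :: L) = 2 ^ (K - τ.length) + wsum K L := rfl
    rw [this, Nat.cast_add, Nat.cast_pow, Nat.cast_ofNat]

theorem wtOK_iff {k : ℕ} {L : List Str} :
    wtOK k L = true ↔ listSum L ≤ (2 : ℝ≥0∞)⁻¹ ^ k := by
  rw [wtOK, decide_eq_true_iff]
  set K := maxLen k L with hK
  have hk : k ≤ K := le_maxLen k L
  have hlen : ∀ τ ∈ L, τ.length ≤ K := fun τ hτ => len_le_maxLen hτ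
  have h2K : (2:ℝ≥0∞) ^ K ≠ 0 := (pow_ne_zero _ two_ne_zero)
  have h2K' : (2:ℝ≥0∞) ^ K ≠ ⊤ := (ENNReal.pow_ne_top ENNReal.ofNat_ne_top)
  constructor
  · intro h
    rw [← ENNReal.mul_le_mul_iff_left h2K h2K', listSum_mul hlen, inv_two_pow_mul hk]
    calc (wsum K L : ℝ≥0∞) ≤ ((2 ^ (K - k) : ℕ) : ℝ≥0∞) := by exact_mod_cast Nat.cast_le.2 h
      _ = (2 : ℝ≥0∞) ^ (K - k) := by rw [Nat.cast_pow, Nat.cast_ofNat]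
  · intro h
    have := (ENNReal.mul_le_mul_iff_left h2K h2K').2 h
    rw [listSum_mul hlen, inv_two_pow_mul hk] at this
    have h2 : ((wsum K L : ℕ) : ℝ≥0∞) ≤ ((2 ^ (K - k) : ℕ) : ℝ≥0∞) := by
      rw [Nat.cast_pow, Nat.cast_ofNat]; exact this
    exact_mod_cast h2

/-! ### invariants of the enumeration -/

theorem state_inv (e k s : ℕ) :
    Ach (state e k s) ∧ listSum (state e k s) ≤ (2 : ℝ≥0∞)⁻¹ ^ k := by
  induction s with
  | zero => exact ⟨List.Pairwise.nil, by simp [state, listSum]⟩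
  | succ s ih =>
    rcases hc : cand e k s with _ | σ
    · simpa only [state, hc] using ih
    · simp only [state, hc]
      rcases hcov : covered σ (state e k s) with _ | _
      · rcases hwt : wtOK k (σ :: flt σ (state e k s)) with _ | _
        · simpa only [step, hcov, hwt, cond_false] using ih
        · simp only [step, hcov, hwt, cond_false, cond_true]
          constructor
          · refine List.pairwise_cons.2 ⟨fun τ hτ => ?_, ?_⟩
            · obtain ⟨hτL, hnp⟩ := mem_flt.1 hτ
              refine ⟨hnp, fun hp => ?_⟩
              have : covered σ (state e k s) = true := covered_iff.2 ⟨τ, hτL, hp⟩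
              rw [this] at hcov; exact Bool.noConfusion hcov
            · exact List.Pairwise.sublist (flt_sublist σ (state e k s)) ih.1
          · exact wtOK_iff.1 hwt
      · simpa only [step, hcov, cond_true] using ih

/-- the open set enumerated in run `(e,k)` by stage `s` -/
def SU (e k s : ℕ) : Set Seq := ⋃ τ ∈ {τ : Str | τ ∈ state e k s}, cyl τ

theorem SU_mono_succ (e k s : ℕ) : SU e k s ⊆ SU e k (s + 1) := by
  rcases hc : cand e k s with _ | σ
  · simp only [SU, state, hc]; exact subset_rfl
  · simp only [SU, state, hc]
    rcases hcov : covered σ (state e k s) with _ | _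
    · rcases hwt : wtOK k (σ :: flt σ (state e k s)) with _ | _
      · simp only [step, hcov, hwt, cond_false]; exact subset_rfl
      · simp only [step, hcov, hwt, cond_false, cond_true]
        refine Set.iUnion₂_subset fun τ hτ => ?_
        by_cases hp : σ <+: τ
        · exact (cyl_mono hp).trans
            (Set.subset_biUnion_of_mem (u := fun τ => cyl τ) (List.mem_cons_self))
        · exact Set.subset_biUnion_of_mem (u := fun τ => cyl τ)
            (List.mem_cons_of_mem _ (mem_flt.2 ⟨hτ, hp⟩))
    · simp only [step, hcov, cond_true]; exact subset_rfl

theorem SU_mono (e k : ℕ) : Monotone (SU e k) :=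
  monotone_nat_of_le_succ (SU_mono_succ e k)

theorem accept_sub {e k s : ℕ} {σ : Str} (h : acceptAt e k s = some σ) :
    cyl σ ⊆ SU e k (s + 1) := by
  rcases hc : cand e k s with _ | τ
  · rw [acceptAt, hc] at h; simp at h
  · rw [acceptAt, hc] at h
    dsimp only at h
    rcases hb : (step k (state e k s) τ).2 with _ | _
    · rw [hb, cond_false] at h; simp at h
    · rw [hb, cond_true] at h
      obtain rfl : τ = σ := Option.some_injective _ h
      simp only [SU, state, hc]
      rcases hcov : covered τ (state e k s) with _ | _
      · rcases hwt : wtOK k (τ :: flt τ (state e k s)) with _ | _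
        · rw [step, hcov, cond_false, hwt, cond_false] at hb; exact Bool.noConfusion hb
        · simp only [step, hcov, hwt, cond_false, cond_true]
          exact Set.subset_biUnion_of_mem (u := fun τ => cyl τ) (List.mem_cons_self)
      · simp only [step, hcov, cond_true]
        obtain ⟨τ', hτ', hp⟩ := covered_iff.1 hcov
        exact (cyl_mono hp).trans (Set.subset_biUnion_of_mem (u := fun τ => cyl τ)
          (show τ' ∈ {τ'' : Str | τ'' ∈ state e k s} from hτ'))

theorem meas_SU (μ : MeasureTheory.Measure Seq) (hμ : FairCoin μ) (e k s : ℕ) :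
    μ (SU e k s) ≤ (2 : ℝ≥0∞)⁻¹ ^ k := by
  rw [SU, meas_biUnion_list μ hμ (state_inv e k s).1]
  exact (state_inv e k s).2

def compU (e k : ℕ) : Set Seq := ⋃ s, SU e k s

theorem meas_compU (μ : MeasureTheory.Measure Seq) (hμ : FairCoin μ) (e k : ℕ) :
    μ (compU e k) ≤ (2 : ℝ≥0∞)⁻¹ ^ k := by
  rw [compU, Directed.measure_iUnion ((SU_mono e k).directed_le)]
  exact iSup_le fun s => meas_SU μ hμ e k s

/-! ### bridge between `cand` and `eval` -/

theorem cand_eval {e k s : ℕ} {σ : Str} (h : cand e k s = some σ) :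
    (eval (Denumerable.ofNat Code e) (Nat.pair k (encode σ))).Dom := by
  rw [cand] at h
  rcases hb : (evaln s.unpair.1 (Denumerable.ofNat Code e) (Nat.pair k s.unpair.2)).isSome
    with _ | _
  · rw [hb, cond_false] at h; simp at h
  · rw [hb, cond_true] at h
    have he : encode σ = s.unpair.2 := decode₂_eq_some.1 h
    rw [he]
    obtain ⟨x, hx⟩ := Option.isSome_iff_exists.1 hb
    exact Part.dom_iff_mem.2 ⟨x, evaln_sound (Option.mem_def.2 hx)⟩

theorem cand_of_dom {e k : ℕ} {σ : Str}
    (h : (eval (Denumerable.ofNat Code e) (Nat.pair k (encode σ))).Dom) :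
    ∃ s, cand e k s = some σ := by
  obtain ⟨x, hx⟩ := Part.dom_iff_mem.1 h
  obtain ⟨t, ht⟩ := evaln_complete.1 hx
  refine ⟨Nat.pair t (encode σ), ?_⟩
  rw [cand, Nat.unpair_pair]
  have hb : (evaln t (Denumerable.ofNat Code e) (Nat.pair k (encode σ))).isSome = true :=
    Option.isSome_iff_exists.2 ⟨x, Option.mem_def.1 ht⟩
  rw [hb, cond_true, decode₂_encode]

theorem cepred_code {p : ℕ × Str → Prop} (h : CEPred p) :
    ∃ c : Code, ∀ k : ℕ, ∀ σ : Str, p (k, σ) ↔ (eval c (Nat.pair k (encode σ))).Dom := by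
  obtain ⟨c, hc⟩ := exists_code.1 h
  refine ⟨c, fun k σ => ?_⟩
  have he : encode ((k, σ) : ℕ × Str) = Nat.pair k (encode σ) := by
    rw [Encodable.encode_prod_val]; rfl
  rw [← he]
  have hev : eval c (encode ((k, σ) : ℕ × Str))
      = (Part.assert (p (k, σ)) fun _ => Part.some ()).map encode := by
    rw [hc]
    simp [Encodable.encodek]
  rw [hev]
  constructor
  · intro hp; exact ⟨hp, trivial⟩
  · rintro ⟨hp, _⟩; exact hp

/-! ### behaviour on a genuine ML test -/

section genuine

variable (μ : MeasureTheory.Measure Seq) (hμ : FairCoin μ)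
variable {W : Set (ℕ × Str)} {c : Code}
variable (hcode : ∀ k : ℕ, ∀ σ : Str, (k, σ) ∈ W ↔ (eval c (Nat.pair k (encode σ))).Dom)
variable {V : ℕ → Set Seq} (hform : ∀ i, V i = ⋃ σ ∈ {σ : Str | (i, σ) ∈ W}, cyl σ)
variable (hbound : ∀ i, μ (V i) ≤ (2 : ℝ≥0∞)⁻¹ ^ i)

include hcode in
theorem state_mem_W (k s : ℕ) : ∀ τ ∈ state (encode c) k s, (k, τ) ∈ W := by
  induction s with
  | zero => intro τ hτ; exact absurd hτ List.not_mem_nil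
  | succ s ih =>
    rcases hc : cand (encode c) k s with _ | σ
    · simpa only [state, hc] using ih
    · have hσ : (k, σ) ∈ W := by
        rw [hcode]
        have := cand_eval hc
        rwa [Denumerable.ofNat_encode] at this
      simp only [state, hc]
      rcases hcov : covered σ (state (encode c) k s) with _ | _
      · rcases hwt : wtOK k (σ :: flt σ (state (encode c) k s)) with _ | _
        · simpa only [step, hcov, hwt, cond_false] using ih
        · simp only [step, hcov, hwt, cond_false, cond_true]
          intro τ hτ
          rcases List.mem_cons.1 hτ with rfl | hτ
          · exact hσ
          · exact ih τ (mem_flt.1 hτ).1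
      · simpa only [step, hcov, cond_true] using ih

include hμ hcode hform hbound in
theorem accepts_all {k : ℕ} {σ : Str} (hσ : (k, σ) ∈ W) :
    ∃ s, acceptAt (encode c) k s = some σ := by
  have hdom : (eval (Denumerable.ofNat Code (encode c)) (Nat.pair k (encode σ))).Dom := by
    rw [Denumerable.ofNat_encode]; exact (hcode k σ).1 hσ
  obtain ⟨s, hs⟩ := cand_of_dom hdom
  refine ⟨s, ?_⟩
  rw [acceptAt, hs]
  dsimp only
  rcases hcov : covered σ (state (encode c) k s) with _ | _
  · -- not covered: show the weight check passes
    have hach : Ach (σ :: flt σ (state (encode c) k s)) := by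
      refine List.pairwise_cons.2 ⟨fun τ hτ => ?_, ?_⟩
      · obtain ⟨hτL, hnp⟩ := mem_flt.1 hτ
        refine ⟨hnp, fun hp => ?_⟩
        have : covered σ (state (encode c) k s) = true := covered_iff.2 ⟨τ, hτL, hp⟩
        rw [this] at hcov; exact Bool.noConfusion hcov
      · exact List.Pairwise.sublist (flt_sublist σ _) (state_inv (encode c) k s).1
    have hsub : (⋃ τ ∈ {τ : Str | τ ∈ σ :: flt σ (state (encode c) k s)}, cyl τ) ⊆ V k := by
      refine Set.iUnion₂_subset fun τ hτ => ?_
      rcases List.mem_cons.1 hτ with rfl | hτ'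
      · rw [hform]
        exact Set.subset_biUnion_of_mem (u := fun τ => cyl τ)
          (show τ ∈ {σ' : Str | (k, σ') ∈ W} from hσ)
      · rw [hform]
        exact Set.subset_biUnion_of_mem (u := fun τ => cyl τ)
          (show τ ∈ {σ' : Str | (k, σ') ∈ W} from
            state_mem_W hcode k s τ (mem_flt.1 hτ').1)
    have hwt : wtOK k (σ :: flt σ (state (encode c) k s)) = true := by
      rw [wtOK_iff, ← meas_biUnion_list μ hμ hach]
      exact le_trans (MeasureTheory.measure_mono hsub) (hbound k)
    rw [step, hcov, cond_false, hwt, cond_true]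
    rfl
  · rw [step, hcov, cond_true]; rfl

end genuine

/-! ### measure of the universal test -/

theorem Uset_subset (n : ℕ) : Uset n ⊆ ⋃ e : ℕ, compU e (n + e + 1) := by
  refine Set.iUnion₂_subset fun σ hσ => ?_
  obtain ⟨m, hm⟩ := hσ
  refine (accept_sub hm).trans ?_
  refine Set.subset_iUnion_of_subset m.unpair.1 ?_
  exact Set.subset_iUnion (SU m.unpair.1 (n + m.unpair.1 + 1)) (m.unpair.2 + 1)

theorem tsum_geom_aux (n : ℕ) :
    (∑' e : ℕ, (2 : ℝ≥0∞)⁻¹ ^ (n + e + 1)) = (2 : ℝ≥0∞)⁻¹ ^ n := by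
  have h1 : ∀ e : ℕ, (2 : ℝ≥0∞)⁻¹ ^ (n + e + 1) = (2 : ℝ≥0∞)⁻¹ ^ (n + 1) * 2⁻¹ ^ e := by
    intro e
    rw [← pow_add]
    ring_nf
  simp only [h1]
  rw [ENNReal.tsum_mul_left, ENNReal.tsum_geometric]
  rw [ENNReal.one_sub_inv_two, inv_inv, pow_succ, mul_assoc,
    ENNReal.inv_mul_cancel two_ne_zero ENNReal.ofNat_ne_top, mul_one]

theorem meas_Uset (μ : MeasureTheory.Measure Seq) (hμ : FairCoin μ) (n : ℕ) :
    μ (Uset n) ≤ (2 : ℝ≥0∞)⁻¹ ^ n := by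
  calc μ (Uset n) ≤ μ (⋃ e : ℕ, compU e (n + e + 1)) :=
        MeasureTheory.measure_mono (Uset_subset n)
    _ ≤ ∑' e : ℕ, μ (compU e (n + e + 1)) := MeasureTheory.measure_iUnion_le _
    _ ≤ ∑' e : ℕ, (2 : ℝ≥0∞)⁻¹ ^ (n + e + 1) :=
        ENNReal.tsum_le_tsum fun e => meas_compU μ hμ e (n + e + 1)
    _ = (2 : ℝ≥0∞)⁻¹ ^ n := tsum_geom_aux n

/-! ### computability of the enumeration -/

open Primrec in
theorem primrec_takeAux : Primrec₂ takeAux := by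
  have hcond : PrimrecPred fun x : (ℕ × Str) × (Str × ℕ) × Bool => x.2.1.2 < x.1.1 :=
    PrimrecRel.comp nat_lt (snd.comp (fst.comp snd)) (fst.comp fst)
  have hthen : Primrec fun x : (ℕ × Str) × (Str × ℕ) × Bool =>
      (x.2.1.1 ++ [x.2.2], x.2.1.2 + 1) :=
    Primrec.pair (list_concat.comp (fst.comp (fst.comp snd)) (snd.comp snd))
      (succ.comp (snd.comp (fst.comp snd)))
  have helse : Primrec fun x : (ℕ × Str) × (Str × ℕ) × Bool => x.2.1 := fst.comp snd
  have h := Primrec.list_foldl (α := ℕ × Str) (β := Bool) (σ := Str × ℕ)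
    (f := fun a => a.2) (g := fun _ => (([] : Str), 0))
    (h := fun a p => if p.1.2 < a.1 then (p.1.1 ++ [p.2], p.1.2 + 1) else p.1)
    snd (const _) (Primrec.ite hcond hthen helse).to₂
  exact (h.of_eq fun a => rfl).to₂

open Primrec in
theorem primrec_pfx : Primrec₂ pfx := by
  have h : PrimrecPred fun x : Str × Str => x.1 = (takeAux x.1.length x.2).1 :=
    PrimrecRel.comp Primrec.eq fst
      (fst.comp (primrec_takeAux.comp (list_length.comp fst) snd))
  have h2 : Primrec fun x : Str × Str => pfx x.1 x.2 :=
    Primrec.of_eq h.decide fun x => decide_eq_decide.2 Iff.rfl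
  exact h2.to₂

open Primrec in
theorem primrec_covered : Primrec₂ covered := by
  have h := Primrec.list_foldr (α := Str × List Str) (β := Str) (σ := Bool)
    (f := fun a => a.2) (g := fun _ => false)
    (h := fun a p => pfx p.1 a.1 || p.2)
    snd (const _)
    ((Primrec.dom_bool₂ (· || ·)).comp
      (primrec_pfx.comp (fst.comp snd) (fst.comp fst)) (snd.comp snd)).to₂
  exact (h.of_eq fun a => rfl).to₂

open Primrec in
theorem primrec_flt : Primrec₂ flt := by
  have h := Primrec.list_foldr (α := Str × List Str) (β := Str) (σ := List Str)
    (f := fun a => a.2) (g := fun _ => ([] : List Str))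
    (h := fun a p => cond (pfx a.1 p.1) p.2 (p.1 :: p.2))
    snd (const _)
    (Primrec.cond (primrec_pfx.comp (fst.comp fst) (fst.comp snd)) (snd.comp snd)
      (list_cons.comp (fst.comp snd) (snd.comp snd))).to₂
  exact (h.of_eq fun a => rfl).to₂

def pow2 : ℕ → ℕ
  | 0 => 1
  | n + 1 => 2 * pow2 n

theorem pow2_eq (n : ℕ) : pow2 n = 2 ^ n := by
  induction n with
  | zero => rfl
  | succ n ih => rw [pow2, ih, pow_succ, mul_comm]

open Primrec in
theorem primrec_pow2 : Primrec fun n : ℕ => 2 ^ n := by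
  have h := Primrec.nat_rec' (f := fun n : ℕ => n) (g := fun _ : ℕ => (1 : ℕ))
    (h := fun _ p => 2 * p.2) Primrec.id (const 1) ((nat_double.comp (snd.comp snd)).to₂)
  refine h.of_eq fun n => ?_
  rw [← pow2_eq]
  induction n with
  | zero => rfl
  | succ n ih => rw [pow2, ← ih]

open Primrec in
theorem primrec_maxLen : Primrec₂ maxLen := by
  have h := Primrec.list_foldr (α := ℕ × List Str) (β := Str) (σ := ℕ)
    (f := fun a => a.2) (g := fun a => a.1)
    (h := fun _ p => max p.1.length p.2)
    snd fst
    (nat_max.comp (list_length.comp (fst.comp snd)) (snd.comp snd)).to₂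
  exact (h.of_eq fun a => rfl).to₂

open Primrec in
theorem primrec_wsum : Primrec₂ (fun a : ℕ × ℕ => fun L : List Str => wsum a.1 L) := by
  have h := Primrec.list_foldr (α := (ℕ × ℕ) × List Str) (β := Str) (σ := ℕ)
    (f := fun a => a.2) (g := fun _ => (0 : ℕ))
    (h := fun a p => 2 ^ (a.1.1 - p.1.length) + p.2)
    snd (const _)
    (nat_add.comp (primrec_pow2.comp (nat_sub.comp (fst.comp (fst.comp fst))
      (list_length.comp (fst.comp snd)))) (snd.comp snd)).to₂
  exact (h.of_eq fun a => rfl).to₂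

open Primrec in
theorem primrec_wtOK : Primrec₂ wtOK := by
  have hm : Primrec fun a : ℕ × List Str => maxLen a.1 a.2 :=
    primrec_maxLen.comp fst snd
  have h : PrimrecPred fun a : ℕ × List Str =>
      wsum (maxLen a.1 a.2) a.2 ≤ 2 ^ (maxLen a.1 a.2 - a.1) :=
    PrimrecRel.comp nat_le
      (primrec_wsum.comp (Primrec.pair hm fst) snd)
      (primrec_pow2.comp (nat_sub.comp hm fst))
  have h2 : Primrec fun a : ℕ × List Str => wtOK a.1 a.2 :=
    Primrec.of_eq h.decide fun a => decide_eq_decide.2 Iff.rfl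
  exact h2.to₂

open Primrec in
theorem primrec_step : Primrec fun x : ℕ × List Str × Str => step x.1 x.2.1 x.2.2 := by
  have hk : Primrec fun x : ℕ × List Str × Str => x.1 := fst
  have hL : Primrec fun x : ℕ × List Str × Str => x.2.1 := fst.comp snd
  have hσ : Primrec fun x : ℕ × List Str × Str => x.2.2 := snd.comp snd
  have hnew : Primrec fun x : ℕ × List Str × Str => x.2.2 :: flt x.2.2 x.2.1 :=
    list_cons.comp hσ (primrec_flt.comp hσ hL)
  exact Primrec.cond (primrec_covered.comp hσ hL)
    (Primrec.pair hL (const true))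
    (Primrec.cond (primrec_wtOK.comp hk hnew)
      (Primrec.pair hnew (const true)) (Primrec.pair hL (const false)))

open Primrec Nat.Partrec.Code in
theorem primrec_cand : Primrec fun x : ℕ × ℕ × ℕ => cand x.1 x.2.1 x.2.2 := by
  have hs : Primrec fun x : ℕ × ℕ × ℕ => x.2.2 := snd.comp snd
  have ht : Primrec fun x : ℕ × ℕ × ℕ => x.2.2.unpair.1 := fst.comp (unpair.comp hs)
  have hm : Primrec fun x : ℕ × ℕ × ℕ => x.2.2.unpair.2 := snd.comp (unpair.comp hs)
  have hco : Primrec fun x : ℕ × ℕ × ℕ => Denumerable.ofNat Code x.1 :=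
    (Primrec.ofNat Code).comp fst
  have hin : Primrec fun x : ℕ × ℕ × ℕ => Nat.pair x.2.1 x.2.2.unpair.2 :=
    Primrec₂.natPair.comp (fst.comp snd) hm
  have hev : Primrec fun x : ℕ × ℕ × ℕ =>
      evaln x.2.2.unpair.1 (Denumerable.ofNat Code x.1) (Nat.pair x.2.1 x.2.2.unpair.2) :=
    primrec_evaln.comp (Primrec.pair (Primrec.pair ht hco) hin)
  exact Primrec.cond (option_isSome.comp hev) (Primrec.decode₂.comp hm) (const none)

theorem state_eq_rec (e k s : ℕ) :
    state e k s = Nat.rec []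
      (fun s ih => Option.casesOn (cand e k s) ih fun σ => (step k ih σ).1) s := by
  induction s with
  | zero => rfl
  | succ s ih => simp only [state, ih]

open Primrec in
theorem primrec_state : Primrec fun x : (ℕ × ℕ) × ℕ => state x.1.1 x.1.2 x.2 := by
  have hg : Primrec fun _ : (ℕ × ℕ) × ℕ => ([] : List Str) := const _
  have hcand : Primrec fun y : ((ℕ × ℕ) × ℕ) × ℕ × List Str =>
      cand y.1.1.1 y.1.1.2 y.2.1 :=
    primrec_cand.comp (Primrec.pair (fst.comp (fst.comp fst))
      (Primrec.pair (snd.comp (fst.comp fst)) (fst.comp snd)))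
  have hstep2 : Primrec₂ fun (y : ((ℕ × ℕ) × ℕ) × ℕ × List Str) (σ : Str) =>
      (step y.1.1.2 y.2.2 σ).1 :=
    (fst.comp (primrec_step.comp (Primrec.pair (snd.comp (fst.comp (fst.comp fst)))
      (Primrec.pair (snd.comp (snd.comp fst)) snd)))).to₂
  have hh : Primrec₂ fun (x : (ℕ × ℕ) × ℕ) (p : ℕ × List Str) =>
      (Option.casesOn (cand x.1.1 x.1.2 p.1) p.2 fun σ => (step x.1.2 p.2 σ).1 : List Str) :=
    (Primrec.option_casesOn hcand (snd.comp snd) hstep2).to₂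
  have h := Primrec.nat_rec' (f := fun x : (ℕ × ℕ) × ℕ => x.2) (g := fun _ => ([] : List Str))
    (h := fun x p =>
      (Option.casesOn (cand x.1.1 x.1.2 p.1) p.2 fun σ => (step x.1.2 p.2 σ).1 : List Str))
    snd hg hh
  exact h.of_eq fun x => (state_eq_rec x.1.1 x.1.2 x.2).symm

open Primrec in
theorem primrec_acceptAt : Primrec fun x : (ℕ × ℕ) × ℕ => acceptAt x.1.1 x.1.2 x.2 := by
  have hcand : Primrec fun x : (ℕ × ℕ) × ℕ => cand x.1.1 x.1.2 x.2 :=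
    primrec_cand.comp (Primrec.pair (fst.comp fst) (Primrec.pair (snd.comp fst) snd))
  have hstate : Primrec fun x : (ℕ × ℕ) × ℕ => state x.1.1 x.1.2 x.2 := primrec_state
  have hg : Primrec₂ fun (x : (ℕ × ℕ) × ℕ) (σ : Str) =>
      cond (step x.1.2 (state x.1.1 x.1.2 x.2) σ).2 (some σ) none :=
    (Primrec.cond (snd.comp (primrec_step.comp (Primrec.pair (snd.comp (fst.comp fst))
        (Primrec.pair (hstate.comp fst) snd))))
      (option_some.comp snd) (const none)).to₂
  exact Primrec.option_casesOn hcand (const none) hg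

open Primrec in
theorem primrec_WUQ : Primrec fun x : (ℕ × Str) × ℕ =>
    decide (acceptAt x.2.unpair.1 (x.1.1 + x.2.unpair.1 + 1) x.2.unpair.2 = some x.1.2) := by
  have he : Primrec fun x : (ℕ × Str) × ℕ => x.2.unpair.1 := fst.comp (unpair.comp snd)
  have hs : Primrec fun x : (ℕ × Str) × ℕ => x.2.unpair.2 := snd.comp (unpair.comp snd)
  have hk : Primrec fun x : (ℕ × Str) × ℕ => x.1.1 + x.2.unpair.1 + 1 :=
    succ.comp (nat_add.comp (fst.comp fst) he)
  have hacc : Primrec fun x : (ℕ × Str) × ℕ =>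
      acceptAt x.2.unpair.1 (x.1.1 + x.2.unpair.1 + 1) x.2.unpair.2 :=
    primrec_acceptAt.comp (Primrec.pair (Primrec.pair he hk) hs)
  exact (PrimrecRel.comp Primrec.eq hacc (option_some.comp (snd.comp fst))).decide

theorem cepred_exists {α} [Primcodable α] {q : α → ℕ → Bool} (hq : Computable₂ q) :
    CEPred fun a => ∃ m, q a m = true := by
  have h1 : Partrec fun a => Nat.rfind fun n => (Part.some (q a n) : Part Bool) :=
    Partrec.rfind hq
  have h2 : Partrec fun a =>
      (Nat.rfind fun n => (Part.some (q a n) : Part Bool)).map fun _ => () :=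
    h1.map (Computable.const ()).to₂
  refine h2.of_eq fun a => Part.ext' ?_ fun _ _ => rfl
  show (Nat.rfind fun n => (Part.some (q a n) : Part Bool)).Dom ↔ _
  refine (Nat.rfind_dom (p := fun n => (Part.some (q a n) : Part Bool))).trans ?_
  constructor
  · rintro ⟨n, hn, -⟩
    exact ⟨⟨n, (Part.mem_some_iff.1 hn).symm⟩, trivial⟩
  · rintro ⟨⟨n, hn⟩, -⟩
    exact ⟨n, Part.mem_some_iff.2 hn.symm, fun {m} _ => trivial⟩

theorem cepred_WU : CEPred (· ∈ WU) := by
  have hq : Computable₂ fun (a : ℕ × Str) (m : ℕ) =>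
      decide (acceptAt m.unpair.1 (a.1 + m.unpair.1 + 1) m.unpair.2 = some a.2) :=
    (primrec_WUQ.to_comp).to₂
  refine (cepred_exists hq).of_eq fun a => ?_
  have hiff : (∃ m : ℕ,
      decide (acceptAt m.unpair.1 (a.1 + m.unpair.1 + 1) m.unpair.2 = some a.2) = true)
      ↔ a ∈ WU := by
    simp only [decide_eq_true_iff]
    exact Iff.rfl
  exact congrArg (fun P : Prop => Part.assert P fun _ => Part.some ()) (propext hiff)


/-- **Existence of a universal Martin-Löf test** (Martin-Löf): there is a Martin-Löf
test `⟨U_i⟩` such that for every Martin-Löf test `⟨V_i⟩`, `⋂_i V_i ⊆ ⋂_i U_i`. -/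
theorem universal_MLTest (μ : MeasureTheory.Measure Seq) (hμ : FairCoin μ) :
    ∃ U : ℕ → Set Seq, MLTest μ U ∧
      ∀ V : ℕ → Set Seq, MLTest μ V → (⋂ i, V i) ⊆ ⋂ i, U i := by
  refine ⟨Uset, ⟨WU, cepred_WU, fun i => rfl, fun i => meas_Uset μ hμ i⟩, ?_⟩
  rintro V ⟨W, hce, hform, hbound⟩ A hA
  obtain ⟨c, hcode⟩ := cepred_code hce
  rw [Set.mem_iInter]
  intro n
  have hAk : A ∈ V (n + encode c + 1) := Set.mem_iInter.1 hA _
  rw [hform] at hAk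
  obtain ⟨σ, hσ, hAσ⟩ := Set.mem_iUnion₂.1 hAk
  obtain ⟨s, hs⟩ := accepts_all μ hμ hcode hform hbound hσ
  refine Set.mem_biUnion ?_ hAσ
  show (n, σ) ∈ WU
  exact ⟨Nat.pair (encode c) s, by rw [Nat.unpair_pair]; exact hs⟩

end AR
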